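/- Let α > 1 and let f belong to the Müntz class M_α. Then for all x > 0 the Poisson type summation formula holds: Σ_{n : μ(n) ≠ 0} f(nx) = Σ_{n=1}^∞ Σ_{m=1}^∞ μ(n) f(n² m x) = Σ_{n=1}^∞ μ(n) (Θf)(n² x). -/

import Mathlib

open MeasureTheory Filter Asymptotics Set Complex

noncomputable section

/-- The Mellin transform of `f`. -/
def mellinT (f : ℝ → ℂ) (s : ℂ) : ℂ := ∫ x in Ioi (0:ℝ), (x : ℂ) ^ (s - 1) * f x

/-- The Müntz class `M_α`. -/
def MuntzClass (α : ℝ) (f : ℝ → ℂ) : Prop :=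
  ContDiffOn ℝ 2 f (Ici 0) ∧
  ∀ j : ℕ, j ≤ 2 →
    (iteratedDerivWithin j f (Ici 0)) =O[atTop] fun x : ℝ => x ^ (-(α + (j : ℝ)))

/-- The Möbius transformation `(Θf)(x) = ∑ f(nx)`. -/
def thetaOp (f : ℝ → ℂ) (x : ℝ) : ℂ := ∑' n : ℕ, f ((n + 1 : ℝ) * x)

/-- The Müntz operator. -/
def muntzOp (f : ℝ → ℂ) (x : ℝ) : ℂ :=
  thetaOp f x - (x : ℂ)⁻¹ * ∫ y in Ioi (0:ℝ), f y

/-- `(1/(2πi)) ∫_{σ-i∞}^{σ+i∞} g(s) ds`. -/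
def lineIntegral (g : ℂ → ℂ) (σ : ℝ) : ℂ :=
  (2 * Real.pi)⁻¹ • ∫ t : ℝ, g (σ + t * Complex.I)

/-- The Fourier cosine transform. -/
def fourierCos (f : ℝ → ℂ) (x : ℝ) : ℂ :=
  (Real.sqrt (2 / Real.pi) : ℂ) * ∫ t in Ioi (0:ℝ), f t * (Real.cos (x * t) : ℂ)

/-- The reduced Möbius operator. -/
def thetaHat (f : ℝ → ℂ) (x : ℝ) : ℂ :=
  ∑' n : ℕ, ((|ArithmeticFunction.moebius (n + 1)| : ℤ) : ℂ) * f ((n + 1 : ℝ) * x)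

/-- The Voronoi operator. -/
def voronoiOp (f : ℝ → ℂ) (x : ℝ) : ℂ :=
  (∑' n : ℕ, ((n + 1 : ℕ).divisors.card : ℂ) * f ((n + 1 : ℝ) * x)) -
    ∫ y in Ioi (0:ℝ), f (x * y) *
      ((Real.log y + 2 * Real.eulerMascheroniConstant : ℝ) : ℂ)

section AuxSquarefree

open ArithmeticFunction
open scoped ArithmeticFunction.zeta

private def sqMoeb : ArithmeticFunction ℤ :=
  ⟨fun n => if IsSquare n then moebius n.sqrt else 0, by simp⟩

private lemma sqMoeb_apply (n : ℕ) :
    sqMoeb n = if IsSquare n then moebius n.sqrt else 0 := rfl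

private lemma isSquare_left_of_coprime {m n : ℕ} (h : Nat.Coprime m n)
    (hs : IsSquare (m * n)) : IsSquare m := by
  obtain ⟨c, hc⟩ := hs
  have hmn : m * n = c ^ 2 := by rw [hc, sq]
  obtain ⟨d, hd⟩ := exists_eq_pow_of_mul_eq_pow (α := ℕ)
    (by rw [Nat.isUnit_iff]; exact h) hmn
  exact ⟨d, by rw [hd, sq]⟩

private lemma sqMoeb_isMult : sqMoeb.IsMultiplicative := by
  refine ⟨?_, ?_⟩
  · rw [sqMoeb_apply, if_pos IsSquare.one]
    simp
  · intro m n h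
    rw [sqMoeb_apply, sqMoeb_apply, sqMoeb_apply]
    by_cases hm : IsSquare m
    · by_cases hn : IsSquare n
      · obtain ⟨a, rfl⟩ := hm
        obtain ⟨b, rfl⟩ := hn
        have h1 : (a * a) * (b * b) = (a * b) * (a * b) := by ring
        have hab : Nat.Coprime a b :=
          (h.coprime_dvd_left (dvd_mul_right a a)).coprime_dvd_right (dvd_mul_right b b)
        rw [if_pos ⟨a * b, h1⟩, if_pos ⟨a, rfl⟩, if_pos ⟨b, rfl⟩, h1,
          Nat.sqrt_eq, Nat.sqrt_eq, Nat.sqrt_eq]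
        exact isMultiplicative_moebius.map_mul_of_coprime hab
      · rw [if_neg hn, mul_zero, if_neg]
        intro hs
        exact hn (isSquare_left_of_coprime h.symm (by rwa [mul_comm] at hs))
    · rw [if_neg hm, zero_mul, if_neg]
      intro hs
      exact hm (isSquare_left_of_coprime h hs)

private lemma sqMoeb_pp {p : ℕ} (hp : p.Prime) (j : ℕ) :
    sqMoeb (p ^ j) = if j = 0 then 1 else if j = 2 then -1 else 0 := by
  rw [sqMoeb_apply]
  by_cases hj : Even j
  · obtain ⟨i, rfl⟩ := hj
    have h1 : p ^ (i + i) = (p ^ i) * (p ^ i) := by rw [← pow_add]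
    rw [if_pos ⟨p ^ i, h1⟩, h1, Nat.sqrt_eq]
    rcases i with _ | _ | i
    · simp
    · rw [pow_one, moebius_apply_prime hp]
      norm_num
    · rw [moebius_apply_prime_pow hp (by omega), if_neg (by omega), if_neg (by omega),
        if_neg (by omega)]
  · have hns : ¬ IsSquare (p ^ j) := by
      rintro ⟨c, hc⟩
      have hcd : c ∣ p ^ j := Dvd.intro_left c hc.symm
      obtain ⟨i, hi, rfl⟩ := (Nat.dvd_prime_pow hp).mp hcd
      have h2 : p ^ j = p ^ (i + i) := by rw [hc, pow_add]
      exact hj ⟨i, Nat.pow_right_injective hp.two_le h2⟩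
    rw [if_neg hns, if_neg (by rintro rfl; exact hj (by decide)),
      if_neg (by rintro rfl; exact hj (by decide))]

private lemma sqMoeb_mul_zeta :
    sqMoeb * (ζ : ArithmeticFunction ℤ) = pmul moebius moebius := by
  rw [IsMultiplicative.eq_iff_eq_on_prime_powers _
    (sqMoeb_isMult.mul isMultiplicative_zeta.natCast) _
    (isMultiplicative_moebius.pmul isMultiplicative_moebius)]
  intro p e hp
  rw [coe_mul_zeta_apply, Nat.sum_divisors_prime_pow hp]
  simp_rw [sqMoeb_pp hp]
  rw [pmul_apply, ← sq, moebius_sq]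
  have hterm : ∀ j : ℕ, (if j = 0 then (1 : ℤ) else if j = 2 then -1 else 0)
      = (if j = 0 then 1 else 0) + (if j = 2 then -1 else 0) := by
    intro j
    split_ifs <;> omega
  simp_rw [hterm]
  rw [Finset.sum_add_distrib, Finset.sum_ite_eq' (Finset.range (e + 1)) 0 (fun _ => (1 : ℤ)),
    Finset.sum_ite_eq' (Finset.range (e + 1)) 2 (fun _ => (-1 : ℤ)),
    if_pos (Finset.mem_range.mpr (by omega))]
  rcases e with _ | _ | e
  · rw [if_neg (by simp), if_pos (by simp [squarefree_one])]
    norm_num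
  · rw [if_neg (by simp), if_pos (by simpa using hp.squarefree)]
    norm_num
  · rw [if_pos (Finset.mem_range.mpr (by omega)), if_neg (by
      rw [Nat.squarefree_pow_iff hp.ne_one (by omega)]
      rintro ⟨-, h⟩
      omega)]
    ring

private lemma moebius_sum_of_sq_dvd {k : ℕ} (hk : k ≠ 0) :
    (∑ d ∈ k.divisors.filter (fun d => d ^ 2 ∣ k), moebius d)
      = if Squarefree k then 1 else 0 := by
  classical
  have h : (sqMoeb * (ζ : ArithmeticFunction ℤ)) k = pmul moebius moebius k := by
    rw [sqMoeb_mul_zeta]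
  rw [coe_mul_zeta_apply, pmul_apply, ← sq, moebius_sq] at h
  rw [← h]
  calc ∑ d ∈ k.divisors.filter (fun d => d ^ 2 ∣ k), moebius d
      = ∑ d ∈ k.divisors.filter (fun d => IsSquare d), moebius d.sqrt := by
        refine Finset.sum_nbij' (fun d => d ^ 2) (fun d => d.sqrt) ?_ ?_ ?_ ?_ ?_
        · intro a ha
          simp only [Finset.mem_filter, Nat.mem_divisors] at ha ⊢
          exact ⟨⟨ha.2, hk⟩, ⟨a, sq a⟩⟩
        · intro b hb
          simp only [Finset.mem_filter, Nat.mem_divisors] at hb ⊢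
          obtain ⟨⟨hbd, -⟩, c, hc⟩ := hb
          subst hc
          rw [Nat.sqrt_eq]
          exact ⟨⟨dvd_trans (dvd_mul_right c c) hbd, hk⟩, by rwa [sq]⟩
        · intro a _
          simp [Nat.sqrt_eq']
        · intro b hb
          simp only [Finset.mem_filter] at hb
          obtain ⟨-, c, hc⟩ := hb
          subst hc
          simp [Nat.sqrt_eq, sq]
        · intro a _
          simp [Nat.sqrt_eq']
    _ = ∑ d ∈ k.divisors, sqMoeb d := by
        rw [Finset.sum_filter]
        refine Finset.sum_congr rfl fun d _ => ?_
        rw [sqMoeb_apply]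

end AuxSquarefree

private lemma muntz_bound {α : ℝ} {f : ℝ → ℂ} (hf : MuntzClass α f) {c : ℝ} (hc : 0 < c)
    (hα : 0 < α) :
    ∃ C : ℝ, 0 ≤ C ∧ ∀ y : ℝ, c ≤ y → ‖f y‖ ≤ C * y ^ (-α) := by
  have h0 := hf.2 0 (by norm_num)
  rw [iteratedDerivWithin_zero, isBigO_iff] at h0
  obtain ⟨C0, hC0⟩ := h0
  rw [eventually_atTop] at hC0
  obtain ⟨R0, hR0⟩ := hC0
  set R := max R0 (max c 1) with hRdef
  have hRpos : (0:ℝ) < R := lt_of_lt_of_le one_pos ((le_max_right c 1).trans (le_max_right _ _))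
  have hcont : ContinuousOn f (Icc c R) :=
    hf.1.continuousOn.mono (fun y hy => le_trans hc.le hy.1)
  obtain ⟨M, hM⟩ := isCompact_Icc.exists_bound_of_continuousOn hcont
  refine ⟨|C0| + |M| * R ^ α, by positivity, fun y hy => ?_⟩
  have hy0 : (0:ℝ) < y := lt_of_lt_of_le hc hy
  have hyα : (0:ℝ) < y ^ (-α) := Real.rpow_pos_of_pos hy0 _
  by_cases hyR : R ≤ y
  · have h1 := hR0 y ((le_max_left _ _).trans hyR)
    have h2 : ‖y ^ (-(α + ((0:ℕ):ℝ)))‖ = y ^ (-α) := by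
      rw [Real.norm_eq_abs, abs_of_pos (Real.rpow_pos_of_pos hy0 _)]
      norm_num
    rw [h2] at h1
    calc ‖f y‖ ≤ C0 * y ^ (-α) := h1
      _ ≤ |C0| * y ^ (-α) := by
          apply mul_le_mul_of_nonneg_right (le_abs_self C0) hyα.le
      _ ≤ (|C0| + |M| * R ^ α) * y ^ (-α) := by
          apply mul_le_mul_of_nonneg_right _ hyα.le
          nlinarith [abs_nonneg M, Real.rpow_pos_of_pos hRpos α]
  · push_neg at hyR
    have h1 : ‖f y‖ ≤ M := hM y ⟨hy, hyR.le⟩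
    have h2 : R ^ (-α) ≤ y ^ (-α) :=
      Real.rpow_le_rpow_of_nonpos hy0 hyR.le (neg_nonpos.mpr hα.le)
    calc ‖f y‖ ≤ M := h1
      _ ≤ |M| := le_abs_self M
      _ = |M| * R ^ α * R ^ (-α) := by
          rw [mul_assoc, ← Real.rpow_add hRpos, add_neg_cancel, Real.rpow_zero, mul_one]
      _ ≤ |M| * R ^ α * y ^ (-α) := by
          apply mul_le_mul_of_nonneg_left h2 (by positivity)
      _ ≤ (|C0| + |M| * R ^ α) * y ^ (-α) := by
          apply mul_le_mul_of_nonneg_right _ hyα.le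
          nlinarith [abs_nonneg C0]

private lemma summable_shift (q : ℝ) (hq : q < -1) :
    Summable (fun n : ℕ => ((n : ℝ) + 1) ^ q) := by
  have h := (summable_nat_add_iff 1).mpr (Real.summable_nat_rpow.mpr hq)
  refine h.congr fun n => ?_
  push_cast
  ring_nf

set_option maxHeartbeats 1000000 in
/-- Poisson type summation formulas for the reduced Möbius operator; the left-hand
sum runs over the squarefree integers, i.e. those `n` with `μ(n) ≠ 0`. -/
theorem poisson_type_squarefree (α : ℝ) (hα : 1 < α) (f : ℝ → ℂ) (hf : MuntzClass α f) :
    ∀ x : ℝ, 0 < x →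
      (∑' n : ℕ, if ArithmeticFunction.moebius (n + 1) ≠ 0 then f ((n + 1 : ℝ) * x) else 0) =
        (∑' n : ℕ, ∑' m : ℕ, (ArithmeticFunction.moebius (n + 1) : ℂ) *
          f ((n + 1 : ℝ) ^ 2 * (m + 1 : ℝ) * x)) ∧
      (∑' n : ℕ, ∑' m : ℕ, (ArithmeticFunction.moebius (n + 1) : ℂ) *
          f ((n + 1 : ℝ) ^ 2 * (m + 1 : ℝ) * x)) =
        ∑' n : ℕ, (ArithmeticFunction.moebius (n + 1) : ℂ) * thetaOp f ((n + 1 : ℝ) ^ 2 * x) := by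
  intro x hx
  obtain ⟨C, hCnn, hC⟩ := muntz_bound hf hx (by linarith)
  have hmoeb : ∀ k : ℕ, ‖((ArithmeticFunction.moebius k : ℤ) : ℂ)‖ ≤ 1 := by
    intro k
    by_cases h : Squarefree k
    · rw [ArithmeticFunction.moebius_apply_of_squarefree h]
      push_cast
      rw [norm_pow, norm_neg, norm_one, one_pow]
    · simp [ArithmeticFunction.moebius_eq_zero_of_not_squarefree h]
  set F : ℕ × ℕ → ℂ := fun p => (ArithmeticFunction.moebius (p.1 + 1) : ℂ) *
      f (((p.1 : ℝ) + 1) ^ 2 * ((p.2 : ℝ) + 1) * x) with hFdef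
  have hbound : ∀ p : ℕ × ℕ, ‖F p‖ ≤
      (C * x ^ (-α) * ((p.1 : ℝ) + 1) ^ (-(2 * α))) * (((p.2 : ℝ) + 1) ^ (-α)) := by
    rintro ⟨n, m⟩
    have hn1 : (0:ℝ) < (n : ℝ) + 1 := by positivity
    have hm1 : (0:ℝ) < (m : ℝ) + 1 := by positivity
    have hge1 : (1:ℝ) ≤ ((n : ℝ) + 1) ^ 2 * ((m : ℝ) + 1) := by nlinarith
    have harg : x ≤ ((n : ℝ) + 1) ^ 2 * ((m : ℝ) + 1) * x := by nlinarith
    have h1 : ‖F (n, m)‖ ≤ ‖f (((n : ℝ) + 1) ^ 2 * ((m : ℝ) + 1) * x)‖ := by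
      rw [hFdef]
      simp only [norm_mul]
      exact mul_le_of_le_one_left (norm_nonneg _) (hmoeb _)
    have h2 := hC _ harg
    have h3 : (((n : ℝ) + 1) ^ 2 * ((m : ℝ) + 1) * x) ^ (-α)
        = ((n : ℝ) + 1) ^ (-(2 * α)) * ((m : ℝ) + 1) ^ (-α) * x ^ (-α) := by
      rw [Real.mul_rpow (by positivity) hx.le, Real.mul_rpow (by positivity) hm1.le,
        ← Real.rpow_natCast ((n : ℝ) + 1) 2, ← Real.rpow_mul hn1.le]
      norm_num
    calc ‖F (n, m)‖ ≤ ‖f (((n : ℝ) + 1) ^ 2 * ((m : ℝ) + 1) * x)‖ := h1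
      _ ≤ C * (((n : ℝ) + 1) ^ 2 * ((m : ℝ) + 1) * x) ^ (-α) := h2
      _ = (C * x ^ (-α) * ((n : ℝ) + 1) ^ (-(2 * α))) * (((m : ℝ) + 1) ^ (-α)) := by
          rw [h3]; ring
  have hdom : Summable (fun p : ℕ × ℕ =>
      (C * x ^ (-α) * ((p.1 : ℝ) + 1) ^ (-(2 * α))) * (((p.2 : ℝ) + 1) ^ (-α))) := by
    refine Summable.mul_of_nonneg (f := fun n : ℕ => C * x ^ (-α) * (((n : ℝ) + 1) ^ (-(2 * α))))
      (g := fun m : ℕ => ((m : ℝ) + 1) ^ (-α))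
      ((summable_shift (-(2*α)) (by linarith)).mul_left (C * x ^ (-α)))
      (summable_shift (-α) (by linarith)) (fun n => ?_) (fun m => ?_)
    · have : (0:ℝ) ≤ ((n : ℝ) + 1) ^ (-(2 * α)) := by positivity
      positivity
    · positivity
  have hFsum : Summable F :=
    Summable.of_norm (Summable.of_nonneg_of_le (fun _ => norm_nonneg _) hbound hdom)
  set g : ℕ × ℕ → ℕ := fun p => (p.1 + 1) ^ 2 * (p.2 + 1) with hgdef
  set T : ℕ → ℂ := fun k => if ArithmeticFunction.moebius k ≠ 0 then f ((k : ℝ) * x) else 0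
    with hTdef
  have hfiber : ∀ k : ℕ, (∑' p : (g ⁻¹' {k} : Set (ℕ × ℕ)), F p) = T k := by
    intro k
    rcases Nat.eq_zero_or_pos k with rfl | hkpos
    · have he : g ⁻¹' {0} = (∅ : Set (ℕ × ℕ)) := by
        ext p
        simp [hgdef]
      rw [he, tsum_empty]
      simp [hTdef]
    · have hk0 : k ≠ 0 := hkpos.ne'
      have hsub : g ⁻¹' {k} ⊆ ↑(Finset.range k ×ˢ Finset.range k) := by
        rintro ⟨n, m⟩ hp
        simp only [Set.mem_preimage, Set.mem_singleton_iff, hgdef] at hp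
        simp only [Finset.coe_product, Set.mem_prod, Finset.mem_coe, Finset.mem_range]
        have hd1 : n + 1 ≤ k := Nat.le_of_dvd hkpos ⟨(n + 1) * (m + 1), by rw [← hp]; ring⟩
        have hd2 : m + 1 ≤ k := Nat.le_of_dvd hkpos ⟨(n + 1) ^ 2, by rw [← hp]; ring⟩
        omega
      have hfin : (g ⁻¹' {k}).Finite :=
        Set.Finite.subset (Finset.range k ×ˢ Finset.range k).finite_toSet hsub
      have h1 : (∑' p : (g ⁻¹' {k} : Set (ℕ × ℕ)), F p) = ∑ p ∈ hfin.toFinset, F p := by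
        rw [tsum_subtype, tsum_eq_sum (s := hfin.toFinset)
          (fun p hp => Set.indicator_of_notMem (fun h => hp (hfin.mem_toFinset.mpr h)) F)]
        exact Finset.sum_congr rfl fun p hp => Set.indicator_of_mem (hfin.mem_toFinset.mp hp) F
      rw [h1]
      have h2 : ∀ p ∈ hfin.toFinset, F p
          = (ArithmeticFunction.moebius (p.1 + 1) : ℂ) * f ((k : ℝ) * x) := by
        rintro ⟨n, m⟩ hp
        have hpk : (n + 1) ^ 2 * (m + 1) = k := by
          simpa [hgdef] using hfin.mem_toFinset.mp hp
        have hreal : ((n : ℝ) + 1) ^ 2 * ((m : ℝ) + 1) = (k : ℝ) := by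
          exact_mod_cast congrArg (Nat.cast : ℕ → ℝ) hpk
        rw [hFdef]
        simp only
        rw [hreal]
      rw [Finset.sum_congr rfl h2, ← Finset.sum_mul]
      have h3 : (∑ p ∈ hfin.toFinset, (ArithmeticFunction.moebius (p.1 + 1) : ℂ))
          = ((∑ d ∈ k.divisors.filter (fun d => d ^ 2 ∣ k),
              ArithmeticFunction.moebius d : ℤ) : ℂ) := by
        push_cast
        refine Finset.sum_nbij' (fun p => p.1 + 1) (fun d => (d - 1, k / d ^ 2 - 1)) ?_ ?_ ?_ ?_ ?_
        · rintro ⟨n, m⟩ hp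
          have hpk : (n + 1) ^ 2 * (m + 1) = k := by
            simpa [hgdef] using hfin.mem_toFinset.mp hp
          simp only [Finset.mem_filter, Nat.mem_divisors]
          refine ⟨⟨⟨(n + 1) * (m + 1), by rw [← hpk]; ring⟩, hk0⟩, ⟨m + 1, hpk.symm⟩⟩
        · intro d hd
          simp only [Finset.mem_filter, Nat.mem_divisors] at hd
          obtain ⟨⟨hdk, -⟩, hd2⟩ := hd
          have hdpos : 0 < d := Nat.pos_of_dvd_of_pos hdk hkpos
          have hd2le : d ^ 2 ≤ k := Nat.le_of_dvd hkpos hd2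
          have hq : 0 < k / d ^ 2 := Nat.div_pos hd2le (by positivity)
          rw [hfin.mem_toFinset]
          simp only [Set.mem_preimage, Set.mem_singleton_iff, hgdef]
          show (d - 1 + 1) ^ 2 * (k / d ^ 2 - 1 + 1) = k
          rw [Nat.sub_add_cancel hdpos, Nat.sub_add_cancel hq, Nat.mul_div_cancel' hd2]
        · rintro ⟨n, m⟩ hp
          have hpk : (n + 1) ^ 2 * (m + 1) = k := by
            simpa [hgdef] using hfin.mem_toFinset.mp hp
          have hdiv : k / (n + 1) ^ 2 = m + 1 := by
            rw [← hpk, Nat.mul_div_cancel_left _ (by positivity)]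
          simp [hdiv]
        · intro d hd
          simp only [Finset.mem_filter, Nat.mem_divisors] at hd
          have hdpos : 0 < d := Nat.pos_of_dvd_of_pos hd.1.1 hkpos
          show d - 1 + 1 = d
          omega
        · intro p _
          rfl
      rw [h3, moebius_sum_of_sq_dvd hk0, hTdef]
      by_cases hsf : Squarefree k
      · rw [if_pos hsf]
        simp only
        rw [if_pos (ArithmeticFunction.moebius_ne_zero_iff_squarefree.mpr hsf)]
        simp
      · rw [if_neg hsf]
        simp only
        rw [if_neg (fun h => h (ArithmeticFunction.moebius_eq_zero_of_not_squarefree hsf))]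
        simp
  have hsumT : HasSum T (∑' p, F p) := by
    have h := hFsum.hasSum.tsum_fiberwise g
    rwa [funext hfiber] at h
  have htot : (∑' p : ℕ × ℕ, F p) = ∑' n : ℕ, ∑' m : ℕ,
      (ArithmeticFunction.moebius (n + 1) : ℂ) * f ((n + 1 : ℝ) ^ 2 * (m + 1 : ℝ) * x) := by
    rw [hFsum.tsum_prod]
  constructor
  · rw [← htot, ← hsumT.tsum_eq, hsumT.summable.tsum_eq_zero_add]
    have hT0 : T 0 = 0 := by simp [hTdef]
    rw [hT0, zero_add]
    refine tsum_congr fun n => ?_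
    rw [hTdef]
    simp only
    norm_cast
  · rw [← htot, hFsum.tsum_prod]
    refine tsum_congr fun n => ?_
    simp only [thetaOp]
    rw [← tsum_mul_left]
    refine tsum_congr fun m => ?_
    rw [hFdef]
    simp only
    congr 2
    ring
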